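/- Let $T = \{l, l+1, \ldots, u\} \subset \mathbb{Z}$ with $l < u$, let $x : T \to [0,1]$, and let $y : T \to \{0,1\}$ satisfy: (C3) $x_i \le x_{i+1} + (1 - y_i)$ for all $i \in T \setminus \{u\}$; (C4) $x_i \ge x_{i+1} - y_i$ for all $i \in T \setminus \{u\}$; and (C5) $y_i \ge y_{i+1}$ for all $i \in T \setminus \{u\}$. Then $x$ is unimodal: there exists $t \in T$ such that $x_i \le x_{i+1}$ for all $i \in T$ with $i + 1 \le t$, and $x_i \ge x_{i+1}$ for all $i \in T \setminus \{u\}$ with $t \le i$. -/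

import Mathlib

/-- **soundness of the MIP unimodality constraints.**
Let `T = {l, …, u} ⊂ ℤ` with `l < u`, let `x : T → [0,1]`, and let `y : T → {0,1}`
satisfy the constraints (C3) `xᵢ ≤ xᵢ₊₁ + (1 - yᵢ)`, (C4) `xᵢ ≥ xᵢ₊₁ - yᵢ` and
(C5) `yᵢ ≥ yᵢ₊₁` for all `i ∈ T \ {u}`. Then `x` is unimodal: there is `t ∈ T` such
that `xᵢ ≤ xᵢ₊₁` whenever `i + 1 ≤ t`, and `xᵢ ≥ xᵢ₊₁` whenever `t ≤ i < u`. -/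
theorem mip_constraints_imp_unimodal
    (l u : ℤ) (hlu : l < u) (x y : ℤ → ℝ)
    (hx : ∀ i ∈ Finset.Icc l u, x i ∈ Set.Icc (0 : ℝ) 1)
    (hy : ∀ i ∈ Finset.Icc l u, y i = 0 ∨ y i = 1)
    (hC3 : ∀ i ∈ Finset.Icc l (u - 1), x i ≤ x (i + 1) + (1 - y i))
    (hC4 : ∀ i ∈ Finset.Icc l (u - 1), x (i + 1) - y i ≤ x i)
    (hC5 : ∀ i ∈ Finset.Icc l (u - 1), y (i + 1) ≤ y i) :
    ∃ t ∈ Finset.Icc l u,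
      (∀ i : ℤ, l ≤ i → i + 1 ≤ t → x i ≤ x (i + 1)) ∧
      (∀ i : ℤ, t ≤ i → i < u → x (i + 1) ≤ x i) := by
  by_cases h : ∀ i ∈ Finset.Icc l (u - 1), y i = 1
  · refine ⟨u, by simp [le_of_lt hlu], ?_, ?_⟩
    · intro i hi hi'
      have hmem : i ∈ Finset.Icc l (u - 1) := Finset.mem_Icc.mpr ⟨hi, by omega⟩
      have := hC3 i hmem
      rw [h i hmem] at this
      linarith
    · intro i hi hi'; omega
  · push_neg at h
    set S : Finset ℤ := (Finset.Icc l (u - 1)).filter (fun i => y i = 0) with hS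
    have hSne : S.Nonempty := by
      obtain ⟨i, hi, hyi⟩ := h
      have : y i = 0 := by
        rcases hy i (Finset.mem_Icc.mpr (by
          have := Finset.mem_Icc.mp hi; constructor <;> omega)) with h0 | h1
        · exact h0
        · exact absurd h1 hyi
      exact ⟨i, Finset.mem_filter.mpr ⟨hi, this⟩⟩
    set t := S.min' hSne with ht
    have htS : t ∈ S := S.min'_mem hSne
    have htmem : t ∈ Finset.Icc l (u - 1) := (Finset.mem_filter.mp htS).1
    have hyt : y t = 0 := (Finset.mem_filter.mp htS).2
    obtain ⟨htl, htu⟩ := Finset.mem_Icc.mp htmem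
    have key : ∀ i : ℤ, t ≤ i → i ≤ u - 1 → y i = 0 := by
      intro i hti
      refine Int.le_induction (motive := fun i _ => i ≤ u - 1 → y i = 0) ?_ ?_ i hti
      · intro _; exact hyt
      · intro i hti ih hiu
        have hi' : i ∈ Finset.Icc l (u - 1) := Finset.mem_Icc.mpr ⟨by omega, by omega⟩
        have h5 := hC5 i hi'
        rw [ih (by omega)] at h5
        rcases hy (i + 1) (Finset.mem_Icc.mpr ⟨by omega, by omega⟩) with h0 | h1
        · exact h0
        · rw [h1] at h5; linarith
    refine ⟨t, Finset.mem_Icc.mpr ⟨htl, by omega⟩, ?_, ?_⟩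
    · intro i hi hi'
      have hmem : i ∈ Finset.Icc l (u - 1) := Finset.mem_Icc.mpr ⟨hi, by omega⟩
      have hyi : y i = 1 := by
        rcases hy i (Finset.mem_Icc.mpr ⟨hi, by omega⟩) with h0 | h1
        · exfalso
          have : t ≤ i := S.min'_le i (Finset.mem_filter.mpr ⟨hmem, h0⟩)
          omega
        · exact h1
      have := hC3 i hmem
      rw [hyi] at this; linarith
    · intro i hti hiu
      have hmem : i ∈ Finset.Icc l (u - 1) := Finset.mem_Icc.mpr ⟨by omega, by omega⟩
      have := hC4 i hmem
      rw [key i hti (by omega)] at this; linarith
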